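/- arXiv:1809.05799 — 2 statements merged into one kernel-verified Lean document; each statement's English description precedes it below -/
import Mathlib

section
/- In the space X of nondecreasing functions from ω₂ to ω₁ + 1, the family consisting of the sets A_α = { x : x(α) = ω₁ } (α < ω₂) and A^ξ = { x : ∀β, x(β) ≤ ξ } (ξ < ω₁) covers X, and every countable subfamily is contained in a set of the form A_α ∪ A^ξ. -/
open Ordinal Cardinal

noncomputable section

def omega1 : Ordinal := (aleph 1).ord
def omega2 : Ordinal := (aleph 2).ord

abbrev Idx := {β : Ordinal // β < omega2}
abbrev Val := {γ : Ordinal // γ ≤ omega1}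

instance : TopologicalSpace Val := Preorder.topology Val
instance : OrderTopology Val := ⟨rfl⟩

/-- The Kunen–van Mill–Mills space: nondecreasing functions from ω₂ to ω₁ + 1. -/
def KvMM : Set (Idx → Val) := {x | ∀ a b : Idx, a ≤ b → x a ≤ x b}

def wTop : Val := ⟨omega1, le_rfl⟩

/-- `A_α = { x : x(α) = ω₁ }`. -/
def Aα (α : Idx) : Set KvMM := {x | (x : Idx → Val) α = wTop}

/-- `A^ξ = { x : ∀ β, x(β) ≤ ξ }` for `ξ < ω₁`. -/
def Aup (ξ : {ξ : Ordinal // ξ < omega1}) : Set KvMM :=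
  {x | ∀ β : Idx, (x : Idx → Val) β ≤ ⟨ξ.1, ξ.2.le⟩}

/-- A regular cardinal bound on a small-indexed family of ordinals. -/
lemma exists_ord_bound {ι : Type w} (f : ι → Ordinal.{u}) (c : Cardinal.{u})
    (hreg : c.IsRegular) (hcard : Cardinal.lift.{u} #ι < Cardinal.lift.{w} c)
    (hf : ∀ i, f i < c.ord) : ∃ b, b < c.ord ∧ ∀ i, f i ≤ b := by
  set S : Set Ordinal.{u} := Set.range f with hS
  have hSb : BddAbove S := ⟨c.ord, by rintro _ ⟨i, rfl⟩; exact (hf i).le⟩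
  have hsmall : Small.{u} S := Ordinal.bddAbove_iff_small.mp hSb
  set f' : Shrink.{u} S → Ordinal.{u} := fun j => ((equivShrink S).symm j : Ordinal) with hf'
  have hsurj : Function.Surjective (fun i : ι => equivShrink S ⟨f i, Set.mem_range_self i⟩) := by
    intro j
    obtain ⟨i, hi⟩ := ((equivShrink S).symm j).2
    refine ⟨i, ?_⟩
    simp only [hi]
    exact (Equiv.apply_symm_apply _ j)
  have hcard' : #(Shrink.{u} S) < c := by
    have hle : Cardinal.lift.{w} #(Shrink.{u} S) ≤ Cardinal.lift.{u} #ι :=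
      Cardinal.lift_mk_le'.mpr ⟨Function.Embedding.ofSurjective _ hsurj⟩
    exact Cardinal.lift_lt.mp (lt_of_le_of_lt hle hcard)
  have hfb : ∀ j, f' j < c.ord := by
    intro j
    obtain ⟨i, hi⟩ := ((equivShrink S).symm j).2
    have : f' j = f i := hi.symm
    rw [this]; exact hf i
  have hsup : iSup f' < c.ord :=
    iSup_lt_ord_lift_of_isRegular hreg (by rwa [Cardinal.lift_id]) hfb
  refine ⟨iSup f', hsup, fun i => ?_⟩
  have : f i = f' (equivShrink S ⟨f i, Set.mem_range_self i⟩) := by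
    simp [hf']
  rw [this]
  exact Ordinal.le_iSup f' _

lemma isRegular_aleph_two : (aleph 2).IsRegular := by
  have h := isRegular_aleph_succ 1
  have h2 : Order.succ (1 : Ordinal) = 2 := by
    rw [← Ordinal.add_one_eq_succ]; norm_num
  rwa [h2] at h


theorem KvMM_cover_and_countable_subfamilies :
    (∀ x : KvMM, (∃ α : Idx, x ∈ Aα α) ∨ (∃ ξ : {ξ : Ordinal // ξ < omega1}, x ∈ Aup ξ)) ∧
    (∀ (g : ℕ → Idx) (h : ℕ → {ξ : Ordinal // ξ < omega1}),
      ∃ α : Idx, ∃ ξ : {ξ : Ordinal // ξ < omega1},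
        ∀ n : ℕ, Aα (g n) ⊆ Aα α ∪ Aup ξ ∧ Aup (h n) ⊆ Aα α ∪ Aup ξ) := by
  constructor
  · intro x
    by_cases hb : ∃ ξ : {ξ : Ordinal // ξ < omega1}, x ∈ Aup ξ
    · exact Or.inr hb
    · left
      push_neg at hb
      have key : ∀ ζ : {ζ : Ordinal // ζ < omega1}, ∃ β : Idx, ζ.1 < ((x : Idx → Val) β).1 := by
        intro ζ
        have h1 := hb ζ
        simp only [Aup, Set.mem_setOf_eq, not_forall] at h1
        obtain ⟨β, hβ⟩ := h1
        exact ⟨β, Subtype.coe_lt_coe.mpr ((not_le.mp hβ : (⟨ζ.1, ζ.2.le⟩ : Val) < (x : Idx → Val) β))⟩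
      set f : {ζ : Ordinal // ζ < omega1} → Ordinal := fun ζ => ((key ζ).choose : Idx).1 with hfdef
      obtain ⟨b, hb2, hble⟩ := exists_ord_bound f (aleph 2) isRegular_aleph_two
        (by
          have hmk : #({ζ : Ordinal // ζ < omega1}) = Cardinal.lift (Ordinal.card omega1) :=
            Ordinal.mk_Iio_ordinal omega1
          rw [hmk, show Ordinal.card omega1 = aleph 1 from card_ord _]
          simp only [Cardinal.lift_lift, Cardinal.lift_aleph, Cardinal.lift_lt]
          rw [aleph_lt_aleph]
          simpa using one_lt_two)
        (fun ζ => ((key ζ).choose).2)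
      refine ⟨⟨b, hb2⟩, ?_⟩
      have hval : ∀ ζ : {ζ : Ordinal // ζ < omega1},
          ζ.1 < ((x : Idx → Val) ⟨b, hb2⟩).1 := by
        intro ζ
        have h1 : ζ.1 < ((x : Idx → Val) (key ζ).choose).1 := (key ζ).choose_spec
        have h2 : (x : Idx → Val) (key ζ).choose ≤ (x : Idx → Val) ⟨b, hb2⟩ :=
          x.2 _ _ (hble ζ)
        exact h1.trans_le h2
      have hge : omega1 ≤ ((x : Idx → Val) ⟨b, hb2⟩).1 :=
        le_of_forall_lt fun ζ hζ => hval ⟨ζ, hζ⟩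
      exact Subtype.ext (le_antisymm ((x : Idx → Val) ⟨b, hb2⟩).2 hge)
  · intro g h
    obtain ⟨a, ha, hale⟩ := exists_ord_bound (fun n => (g n).1) (aleph 2) isRegular_aleph_two
      (by simp only [Cardinal.mk_nat, Cardinal.lift_aleph0, Cardinal.lift_aleph]
          rw [← aleph_zero, aleph_lt_aleph]
          simpa using (by norm_num : (0 : Ordinal) < 2))
      (fun n => (g n).2)
    obtain ⟨e, he, hele⟩ := exists_ord_bound (fun n => (h n).1) (aleph 1) isRegular_aleph_one
      (by simp only [Cardinal.mk_nat, Cardinal.lift_aleph0, Cardinal.lift_aleph]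
          rw [← aleph_zero, aleph_lt_aleph]
          simpa using (by norm_num : (0 : Ordinal) < 1))
      (fun n => (h n).2)
    refine ⟨⟨a, ha⟩, ⟨e, he⟩, fun n => ⟨?_, ?_⟩⟩
    · intro x hx
      left
      have hle : (x : Idx → Val) (g n) ≤ (x : Idx → Val) ⟨a, ha⟩ := x.2 _ _ (hale n)
      have hxg : (x : Idx → Val) (g n) = wTop := hx
      exact Subtype.ext (le_antisymm ((x : Idx → Val) ⟨a, ha⟩).2 (by
        have := hxg ▸ hle
        exact this))
    · intro x hx
      right
      intro β
      exact le_trans (hx β) (hele n)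

end
end

section
/- Let π : K → X be a continuous surjection between compact Hausdorff spaces, with K extremally disconnected. If A ⊆ X is a closed P-set in X, then π⁻¹(A) is a closed P-set in K. -/
/-- A set `S` is a P-set if every Gδ-set containing `S` is a neighbourhood of `S`. -/
def IsPSet {Y : Type*} [TopologicalSpace Y] (S : Set Y) : Prop :=
  ∀ G : Set Y, IsGδ G → S ⊆ G → S ⊆ interior G

theorem preimage_pset_of_extremally_disconnected
    {K X : Type*} [TopologicalSpace K] [CompactSpace K] [T2Space K]
    [ExtremallyDisconnected K]
    [TopologicalSpace X] [CompactSpace X] [T2Space X]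
    (π : K → X) (hcont : Continuous π) (hsurj : Function.Surjective π)
    {A : Set X} (hA : IsClosed A) (hP : IsPSet A) :
    IsClosed (π ⁻¹' A) ∧ IsPSet (π ⁻¹' A) := by
  refine ⟨hA.preimage hcont, ?_⟩
  intro G hG hAG
  obtain ⟨T, hTopen, hTcount, rfl⟩ := hG
  have hclosed : IsClosedMap π := hcont.isClosedMap
  set V : Set X := ⋂ U ∈ T, (π '' Uᶜ)ᶜ with hV
  have hVgδ : IsGδ V := by
    refine IsGδ.biInter hTcount fun U hU => ?_
    exact ((hclosed _ (hTopen U hU).isClosed_compl).isOpen_compl).isGδ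
  have hAV : A ⊆ V := by
    intro a ha
    simp only [hV, Set.mem_iInter]
    rintro U hU ⟨k, hk, rfl⟩
    exact hk (hAG ha U hU)
  have hint := hP V hVgδ hAV
  have hsub : π ⁻¹' (interior V) ⊆ ⋂₀ T := by
    intro k hk U hU
    have hkV : π k ∈ V := interior_subset hk
    simp only [hV, Set.mem_iInter] at hkV
    by_contra hkU
    exact hkV U hU ⟨k, hkU, rfl⟩
  intro k hk
  exact interior_maximal hsub (isOpen_interior.preimage hcont) (hint hk)
end
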